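/- The set {y in Q[[q]][t] : L1~ y = 0} is a Q-vector subspace of Q[[q]][t] of dimension exactly 4. (The Picard-Fuchs equation has a 4-dimensional space of solutions I_0, I_1, I_2, I_3, reflecting maximal unipotent monodromy at q = 0.) -/

import Mathlib

open PowerSeries

/-- The operator `D = q * d/dq` on `ℚ[[q]]`. -/
noncomputable def Dop (f : ℚ⟦X⟧) : ℚ⟦X⟧ := X * derivative ℚ f

/-- Coefficient of `D^4` in the Picard-Fuchs operator. -/
noncomputable def A4 : ℚ⟦X⟧ := (1 - 289 * X - 57 * X ^ 2 + X ^ 3) * (1 - 3 * X) ^ 2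
/-- Coefficient of `D^3` in the Picard-Fuchs operator. -/
noncomputable def A3 : ℚ⟦X⟧ := 4 * X * (3 * X - 1) * (143 + 57 * X - 87 * X ^ 2 + 3 * X ^ 3)
/-- Coefficient of `D^2` in the Picard-Fuchs operator. -/
noncomputable def A2 : ℚ⟦X⟧ :=
  2 * X * (-212 - 473 * X + 725 * X ^ 2 - 435 * X ^ 3 + 27 * X ^ 4)
/-- Coefficient of `D^1` in the Picard-Fuchs operator. -/
noncomputable def A1 : ℚ⟦X⟧ :=
  2 * X * (-69 - 481 * X + 159 * X ^ 2 - 171 * X ^ 3 + 18 * X ^ 4)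
/-- Coefficient of `D^0` in the Picard-Fuchs operator. -/
noncomputable def A0 : ℚ⟦X⟧ := X * (-17 - 202 * X - 8 * X ^ 2 - 54 * X ^ 3 + 9 * X ^ 4)

/-- The Picard-Fuchs operator of Rødland's mirror family of the Pfaffian
Calabi-Yau 3-fold, acting on `ℚ[[q]]` (here `q` is `PowerSeries.X`). -/
noncomputable def L1 (f : ℚ⟦X⟧) : ℚ⟦X⟧ :=
  A4 * Dop^[4] f + A3 * Dop^[3] f + A2 * Dop^[2] f + A1 * Dop f + A0 * f

/-- The extension of `D` to the derivation on `ℚ[[q]][t]` with `D t = 1`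
(where `t` plays the role of `ln q`). -/
noncomputable def Dt (y : Polynomial ℚ⟦X⟧) : Polynomial ℚ⟦X⟧ :=
  Polynomial.derivative y + y.sum fun n a => Polynomial.C (Dop a) * Polynomial.X ^ n

/-- The Picard-Fuchs operator acting on `ℚ[[q]][t]`, with `D` replaced by its
extension `Dt`. -/
noncomputable def L1t (y : Polynomial ℚ⟦X⟧) : Polynomial ℚ⟦X⟧ :=
    Polynomial.C A4 * Dt^[4] y + Polynomial.C A3 * Dt^[3] y
  + Polynomial.C A2 * Dt^[2] y + Polynomial.C A1 * Dt y + Polynomial.C A0 * y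


lemma coeff_Dop (n : ℕ) (f : ℚ⟦X⟧) : coeff (R := ℚ) n (Dop f) = n * coeff (R := ℚ) n f := by
  unfold Dop
  cases n with
  | zero => simp [PowerSeries.coeff_zero_eq_constantCoeff]
  | succ m =>
    rw [coeff_succ_X_mul, coeff_derivative]
    push_cast; ring

lemma Dop_zero : Dop 0 = 0 := by simp [Dop]

lemma Dop_add (f g : ℚ⟦X⟧) : Dop (f + g) = Dop f + Dop g := by
  simp [Dop, mul_add]

lemma sum_part_coeff (y : Polynomial ℚ⟦X⟧) (k : ℕ) :
    (y.sum fun n a => Polynomial.C (Dop a) * Polynomial.X ^ n).coeff k = Dop (y.coeff k) := by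
  rw [Polynomial.sum_def, Polynomial.finset_sum_coeff]
  simp only [Polynomial.coeff_C_mul, Polynomial.coeff_X_pow, mul_ite, mul_one, mul_zero]
  rw [Finset.sum_ite_eq y.support k (fun n => Dop (y.coeff n))]
  split_ifs with h
  · rfl
  · rw [Polynomial.notMem_support_iff.mp h, Dop_zero]

lemma coeff_Dt (y : Polynomial ℚ⟦X⟧) (k : ℕ) :
    (Dt y).coeff k = y.coeff (k+1) * ((k:ℚ⟦X⟧)+1) + Dop (y.coeff k) := by
  rw [Dt, Polynomial.coeff_add, sum_part_coeff, Polynomial.coeff_derivative]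

/-- `q^n`-coefficient of an element of `ℚ⟦X⟧[t]`, as a polynomial in `ℚ[t]`. -/
noncomputable def pc (n : ℕ) (y : Polynomial ℚ⟦X⟧) : Polynomial ℚ :=
  y.sum fun k a => Polynomial.C (coeff (R := ℚ) n a) * Polynomial.X ^ k

lemma coeff_pc (n k : ℕ) (y : Polynomial ℚ⟦X⟧) :
    (pc n y).coeff k = coeff (R := ℚ) n (y.coeff k) := by
  rw [pc, Polynomial.sum_def, Polynomial.finset_sum_coeff]
  simp only [Polynomial.coeff_C_mul, Polynomial.coeff_X_pow, mul_ite, mul_one, mul_zero]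
  rw [Finset.sum_ite_eq y.support k (fun m => coeff (R := ℚ) n (y.coeff m))]
  split_ifs with h
  · rfl
  · rw [Polynomial.notMem_support_iff.mp h, map_zero]

lemma pc_zero (n : ℕ) : pc n 0 = 0 := by
  ext k; simp [coeff_pc]

lemma pc_add (n : ℕ) (a b : Polynomial ℚ⟦X⟧) : pc n (a + b) = pc n a + pc n b := by
  ext k; simp [coeff_pc]

lemma pc_neg (n : ℕ) (a : Polynomial ℚ⟦X⟧) : pc n (-a) = - pc n a := by
  ext k; simp [coeff_pc]

lemma eq_zero_of_pc (y : Polynomial ℚ⟦X⟧) (h : ∀ n, pc n y = 0) : y = 0 := by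
  ext k n
  have := congrArg (fun p => Polynomial.coeff p k) (h n)
  simpa [coeff_pc] using this

/-- The operator `∂/∂t + c` on `ℚ[t]`. -/
noncomputable def E (c : ℚ) (p : Polynomial ℚ) : Polynomial ℚ :=
  Polynomial.derivative p + c • p

lemma coeff_E (c : ℚ) (p : Polynomial ℚ) (k : ℕ) :
    (E c p).coeff k = p.coeff (k+1) * (k+1) + c * p.coeff k := by
  simp [E, Polynomial.coeff_derivative]

lemma E_add (c : ℚ) (p q : Polynomial ℚ) : E c (p + q) = E c p + E c q := by
  simp [E, smul_add]; ring

lemma E_neg (c : ℚ) (p : Polynomial ℚ) : E c (-p) = - E c p := by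
  unfold E; rw [map_neg, smul_neg, neg_add]

lemma E_smul (c a : ℚ) (p : Polynomial ℚ) : E c (a • p) = a • E c p := by
  simp [E, smul_add, smul_comm a c]

lemma E_iter_neg (c : ℚ) (i : ℕ) (p : Polynomial ℚ) : (E c)^[i] (-p) = - (E c)^[i] p := by
  induction i generalizing p with
  | zero => simp
  | succ m ih => rw [Function.iterate_succ_apply, E_neg, ih, Function.iterate_succ_apply]

lemma pc_Dt (n : ℕ) (y : Polynomial ℚ⟦X⟧) : pc n (Dt y) = E n (pc n y) := by
  ext k
  rw [coeff_pc, coeff_Dt, coeff_E, map_add, coeff_Dop, coeff_pc, coeff_pc]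
  have : (↑k + 1 : ℚ⟦X⟧) = C (R := ℚ) ((k:ℚ)+1) := by push_cast [map_add, map_one]; rfl
  rw [this, PowerSeries.coeff_mul_C]

lemma pc_Dt_iter (n i : ℕ) (y : Polynomial ℚ⟦X⟧) :
    pc n (Dt^[i] y) = (E n)^[i] (pc n y) := by
  induction i generalizing y with
  | zero => rfl
  | succ m ih => rw [Function.iterate_succ_apply, Function.iterate_succ_apply, ih, pc_Dt]

lemma pc_C_mul (Aa : ℚ⟦X⟧) (y : Polynomial ℚ⟦X⟧) (n : ℕ) :
    pc n (Polynomial.C Aa * y) = ∑ m ∈ Finset.range (n+1), coeff (R := ℚ) m Aa • pc (n-m) y := by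
  ext k
  rw [coeff_pc, Polynomial.coeff_C_mul, PowerSeries.coeff_mul,
    Finset.Nat.sum_antidiagonal_eq_sum_range_succ_mk, Polynomial.finset_sum_coeff]
  refine Finset.sum_congr rfl fun m _ => ?_
  rw [Polynomial.coeff_smul, coeff_pc, smul_eq_mul]

noncomputable def Acoe : ℕ → ℚ⟦X⟧
  | 0 => A0
  | 1 => A1
  | 2 => A2
  | 3 => A3
  | 4 => A4
  | _ => 0

lemma L1t_eq_sum (y : Polynomial ℚ⟦X⟧) :
    L1t y = ∑ i ∈ Finset.range 5, Polynomial.C (Acoe i) * Dt^[i] y := by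
  rw [L1t]
  rw [Finset.sum_range_succ, Finset.sum_range_succ, Finset.sum_range_succ,
    Finset.sum_range_succ, Finset.sum_range_one]
  simp only [Acoe, Function.iterate_zero_apply, Function.iterate_one]
  ring

lemma constantCoeff_Acoe (i : ℕ) (h : i < 4) : coeff (R := ℚ) 0 (Acoe i) = 0 := by
  interval_cases i <;>
    simp [Acoe, A0, A1, A2, A3, PowerSeries.coeff_zero_eq_constantCoeff, map_ofNat]

lemma constantCoeff_A4 : coeff (R := ℚ) 0 (Acoe 4) = 1 := by
  simp [Acoe, A4, PowerSeries.coeff_zero_eq_constantCoeff, map_ofNat]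

lemma pc_sum {α : Type*} (n : ℕ) (s : Finset α) (f : α → Polynomial ℚ⟦X⟧) :
    pc n (∑ i ∈ s, f i) = ∑ i ∈ s, pc n (f i) := by
  classical
  induction s using Finset.induction_on with
  | empty => simp [pc_zero]
  | insert _ _ h ih => rw [Finset.sum_insert h, Finset.sum_insert h, pc_add, ih]

lemma pc_L1t (n : ℕ) (y : Polynomial ℚ⟦X⟧) :
    pc n (L1t y) = ∑ i ∈ Finset.range 5, ∑ m ∈ Finset.range (n+1),
      coeff (R := ℚ) (n-m) (Acoe i) • (E m)^[i] (pc m y) := by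
  rw [L1t_eq_sum, pc_sum]
  refine Finset.sum_congr rfl fun i _ => ?_
  rw [pc_C_mul]
  rw [← Finset.sum_range_reflect (fun m => coeff (R := ℚ) (n-m) (Acoe i) • (E m)^[i] (pc m y)) (n+1)]
  refine Finset.sum_congr rfl fun m hm => ?_
  have hm' : m ≤ n := Nat.lt_succ_iff.mp (Finset.mem_range.mp hm)
  rw [pc_Dt_iter]
  have h1 : n + 1 - 1 - m = n - m := by omega
  have h2 : n - (n - m) = m := by omega
  rw [h1, h2]

lemma pc_L1t_split (n : ℕ) (y : Polynomial ℚ⟦X⟧) :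
    pc n (L1t y) = (E n)^[4] (pc n y) + ∑ i ∈ Finset.range 5, ∑ m ∈ Finset.range n,
      coeff (R := ℚ) (n-m) (Acoe i) • (E m)^[i] (pc m y) := by
  rw [pc_L1t]
  have : ∀ i ∈ Finset.range 5,
      ∑ m ∈ Finset.range (n+1), coeff (R := ℚ) (n-m) (Acoe i) • (E m)^[i] (pc m y)
      = coeff (R := ℚ) 0 (Acoe i) • (E n)^[i] (pc n y)
        + ∑ m ∈ Finset.range n, coeff (R := ℚ) (n-m) (Acoe i) • (E m)^[i] (pc m y) := by
    intro i _
    rw [Finset.sum_range_succ, Nat.sub_self, add_comm]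
  rw [Finset.sum_congr rfl this, Finset.sum_add_distrib]
  congr 1
  rw [Finset.sum_range_succ, Finset.sum_range_succ, Finset.sum_range_succ,
    Finset.sum_range_succ, Finset.sum_range_one, constantCoeff_A4,
    constantCoeff_Acoe 0 (by norm_num), constantCoeff_Acoe 1 (by norm_num),
    constantCoeff_Acoe 2 (by norm_num), constantCoeff_Acoe 3 (by norm_num)]
  simp

lemma E_injective {c : ℚ} (hc : c ≠ 0) {p : Polynomial ℚ} (h : E c p = 0) : p = 0 := by
  by_contra hp
  have h1 : (E c p).coeff p.natDegree = 0 := by rw [h]; simp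
  rw [coeff_E, Polynomial.coeff_eq_zero_of_natDegree_lt (lt_add_one _), zero_mul, zero_add] at h1
  exact (mul_ne_zero hc (Polynomial.leadingCoeff_ne_zero.mpr hp)) h1

lemma E_iter_injective {c : ℚ} (hc : c ≠ 0) (i : ℕ) {p : Polynomial ℚ}
    (h : (E c)^[i] p = 0) : p = 0 := by
  induction i generalizing p with
  | zero => exact h
  | succ m ih => exact E_injective hc (ih (by rwa [← Function.iterate_succ_apply] ))

lemma E_zero_eq (p : Polynomial ℚ) : E 0 p = Polynomial.derivative p := by
  simp [E]

lemma iterate_four (f : Polynomial ℚ → Polynomial ℚ) (p : Polynomial ℚ) :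
    f^[4] p = f (f (f (f p))) := rfl

lemma coeff_D4 (p : Polynomial ℚ) (j : ℕ) :
    (Polynomial.derivative^[4] p).coeff j
      = p.coeff (j+4) * ((j+1)*(j+2)*(j+3)*(j+4) : ℚ) := by
  rw [iterate_four]
  simp only [Polynomial.coeff_derivative]
  push_cast
  ring_nf

noncomputable def Einv (c : ℚ) (p : Polynomial ℚ) : Polynomial ℚ :=
  ∑ j ∈ Finset.range (p.natDegree + 1),
    ((-1:ℚ)^j * (c⁻¹)^(j+1)) • Polynomial.derivative^[j] p

noncomputable def uTerm (c : ℚ) (p : Polynomial ℚ) (j : ℕ) : Polynomial ℚ :=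
  (c * ((-1:ℚ)^j * (c⁻¹)^(j+1))) • Polynomial.derivative^[j] p

lemma E_Einv {c : ℚ} (hc : c ≠ 0) (p : Polynomial ℚ) : E c (Einv c p) = p := by
  set d := p.natDegree with hd
  have hca : ∀ j : ℕ, c * (c⁻¹)^(j+1) = (c⁻¹)^j := by
    intro j
    rw [pow_succ, ← mul_assoc, mul_comm c, mul_assoc, mul_inv_cancel₀ hc, mul_one]
  have hE : E c (Einv c p)
      = ∑ j ∈ Finset.range (d+1), ((-1:ℚ)^j * (c⁻¹)^(j+1)) • Polynomial.derivative^[j+1] p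
        + ∑ j ∈ Finset.range (d+1), uTerm c p j := by
    rw [E, Einv, map_sum, Finset.smul_sum]
    congr 1
    · refine Finset.sum_congr rfl fun j _ => ?_
      rw [Polynomial.derivative_smul,
        ← Function.iterate_succ_apply' (⇑Polynomial.derivative) j p]
    · refine Finset.sum_congr rfl fun j _ => ?_
      rw [uTerm, smul_smul]
  have hterm : ∀ j : ℕ, ((-1:ℚ)^j * (c⁻¹)^(j+1)) • Polynomial.derivative^[j+1] p
      = - uTerm c p (j+1) := by
    intro j
    rw [uTerm, ← neg_smul]
    congr 1
    rw [← mul_assoc, mul_comm c ((-1:ℚ)^(j+1)), mul_assoc, hca (j+1), pow_succ]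
    ring
  have hdlt : p.natDegree < d + 1 := by omega
  have hu_top : uTerm c p (d+1) = 0 := by
    rw [uTerm, Polynomial.iterate_derivative_eq_zero hdlt, smul_zero]
  have hshift : ∑ j ∈ Finset.range (d+1), uTerm c p (j+1)
      = ∑ j ∈ Finset.range (d+1), uTerm c p j - uTerm c p 0 := by
    have h2 := Finset.sum_range_succ' (uTerm c p) (d+1)
    have h3 := Finset.sum_range_succ (uTerm c p) (d+1)
    rw [hu_top, add_zero] at h3
    rw [← h3, h2]
    ring
  have hu0 : uTerm c p 0 = p := by
    rw [uTerm]
    norm_num [mul_inv_cancel₀ hc]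
  rw [hE, Finset.sum_congr rfl fun j _ => hterm j, Finset.sum_neg_distrib, hshift, hu0]
  abel

/-- Degree (in `t`) at most 3. -/
def lowdeg (p : Polynomial ℚ) : Prop := ∀ k, 4 ≤ k → p.coeff k = 0

lemma lowdeg_derivative {p : Polynomial ℚ} (h : lowdeg p) : lowdeg (Polynomial.derivative p) := by
  intro k hk
  rw [Polynomial.coeff_derivative, h (k+1) (by omega), zero_mul]

lemma lowdeg_smul {p : Polynomial ℚ} (a : ℚ) (h : lowdeg p) : lowdeg (a • p) := by
  intro k hk
  rw [Polynomial.coeff_smul, h k hk, smul_zero]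

lemma lowdeg_add {p q : Polynomial ℚ} (hp : lowdeg p) (hq : lowdeg q) : lowdeg (p + q) := by
  intro k hk
  rw [Polynomial.coeff_add, hp k hk, hq k hk, add_zero]

lemma lowdeg_zero : lowdeg (0 : Polynomial ℚ) := fun k _ => rfl

lemma lowdeg_neg {p : Polynomial ℚ} (h : lowdeg p) : lowdeg (-p) := by
  intro k hk
  rw [Polynomial.coeff_neg, h k hk, neg_zero]

lemma lowdeg_E {p : Polynomial ℚ} (c : ℚ) (h : lowdeg p) : lowdeg (E c p) :=
  lowdeg_add (lowdeg_derivative h) (lowdeg_smul c h)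

lemma lowdeg_E_iter {p : Polynomial ℚ} (c : ℚ) (i : ℕ) (h : lowdeg p) : lowdeg ((E c)^[i] p) := by
  induction i generalizing p with
  | zero => exact h
  | succ m ih => rw [Function.iterate_succ_apply]; exact ih (lowdeg_E c h)

lemma lowdeg_derivative_iter {p : Polynomial ℚ} (j : ℕ) (h : lowdeg p) :
    lowdeg (Polynomial.derivative^[j] p) := by
  induction j generalizing p with
  | zero => exact h
  | succ m ih => rw [Function.iterate_succ_apply]; exact ih (lowdeg_derivative h)

lemma lowdeg_sum {α : Type*} (s : Finset α) (f : α → Polynomial ℚ)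
    (h : ∀ i ∈ s, lowdeg (f i)) : lowdeg (∑ i ∈ s, f i) := by
  classical
  induction s using Finset.induction_on with
  | empty => simpa using lowdeg_zero
  | @insert a s ha ih =>
    rw [Finset.sum_insert ha]
    exact lowdeg_add (h a (Finset.mem_insert_self a s))
      (ih fun i hi => h i (Finset.mem_insert_of_mem hi))

lemma lowdeg_Einv {p : Polynomial ℚ} (c : ℚ) (h : lowdeg p) : lowdeg (Einv c p) :=
  lowdeg_sum _ _ fun j _ => lowdeg_smul _ (lowdeg_derivative_iter j h)

noncomputable def Einv4 (c : ℚ) (p : Polynomial ℚ) : Polynomial ℚ := (Einv c)^[4] p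

lemma lowdeg_Einv4 {p : Polynomial ℚ} (c : ℚ) (h : lowdeg p) : lowdeg (Einv4 c p) := by
  rw [Einv4, iterate_four]
  exact lowdeg_Einv c (lowdeg_Einv c (lowdeg_Einv c (lowdeg_Einv c h)))

lemma E4_Einv4 {c : ℚ} (hc : c ≠ 0) (p : Polynomial ℚ) : (E c)^[4] (Einv4 c p) = p := by
  rw [Einv4, iterate_four (E c), iterate_four (Einv c), E_Einv hc, E_Einv hc, E_Einv hc, E_Einv hc]

noncomputable def NE (c : ℚ) (p : Polynomial ℚ) : Polynomial ℚ := - Einv4 c p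

noncomputable def ysol (p : Polynomial ℚ) : ℕ → Polynomial ℚ
  | 0 => p
  | (n+1) => NE (((n+1 : ℕ)) : ℚ) (∑ i ∈ Finset.range 5,
      ∑ m ∈ (Finset.range (n+1)).attach,
        coeff (R := ℚ) (n+1-m.1) (Acoe i) • (E (m.1 : ℚ))^[i] (ysol p m.1))
decreasing_by exact Finset.mem_range.mp m.2

lemma ysol_succ (p : Polynomial ℚ) (n : ℕ) :
    ysol p (n+1) = - Einv4 (((n+1 : ℕ)) : ℚ) (∑ i ∈ Finset.range 5,
      ∑ m ∈ Finset.range (n+1),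
        coeff (R := ℚ) (n+1-m) (Acoe i) • (E (m : ℚ))^[i] (ysol p m)) := by
  rw [ysol, NE]
  congr 2
  refine Finset.sum_congr rfl fun i _ => ?_
  rw [← Finset.sum_attach (Finset.range (n+1))
    (fun m => coeff (R := ℚ) (n+1-m) (Acoe i) • (E (m : ℚ))^[i] (ysol p m))]

lemma lowdeg_ysol {p : Polynomial ℚ} (hp : lowdeg p) : ∀ n, lowdeg (ysol p n) := by
  intro n
  induction n using Nat.strong_induction_on with
  | _ n ih =>
    cases n with
    | zero => rw [ysol]; exact hp
    | succ m =>
      rw [ysol_succ]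
      refine lowdeg_neg (lowdeg_Einv4 _ (lowdeg_sum _ _ fun i _ => lowdeg_sum _ _ fun j hj => ?_))
      exact lowdeg_smul _ (lowdeg_E_iter _ _ (ih j (Finset.mem_range.mp hj)))

noncomputable def Ysol (p : Polynomial ℚ) : Polynomial ℚ⟦X⟧ :=
  ∑ k ∈ Finset.range 4,
    Polynomial.C (PowerSeries.mk fun n => (ysol p n).coeff k) * Polynomial.X ^ k

lemma pc_Ysol {p : Polynomial ℚ} (hp : lowdeg p) (n : ℕ) : pc n (Ysol p) = ysol p n := by
  ext k
  rw [coeff_pc, Ysol, Polynomial.finset_sum_coeff]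
  simp only [Polynomial.coeff_C_mul, Polynomial.coeff_X_pow, mul_ite, mul_one, mul_zero]
  rw [map_sum]
  simp only [apply_ite (coeff (R := ℚ) n), map_zero, PowerSeries.coeff_mk]
  rw [Finset.sum_ite_eq (Finset.range 4) k (fun j => (ysol p n).coeff j)]
  split_ifs with h
  · rfl
  · exact (lowdeg_ysol hp n k (by simpa using Finset.mem_range.not.mp h)).symm

lemma ysol_zero (p : Polynomial ℚ) : ysol p 0 = p := by rw [ysol]

lemma D4_eq_zero_of_lowdeg {p : Polynomial ℚ} (hp : lowdeg p) :
    Polynomial.derivative^[4] p = 0 := by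
  ext j
  rw [coeff_D4, hp (j+4) (by omega), zero_mul, Polynomial.coeff_zero]

lemma E_zero_iter4 (p : Polynomial ℚ) : (E 0)^[4] p = Polynomial.derivative^[4] p := by
  rw [iterate_four (E 0), iterate_four, E_zero_eq, E_zero_eq, E_zero_eq, E_zero_eq]

lemma L1t_Ysol {p : Polynomial ℚ} (hp : lowdeg p) : L1t (Ysol p) = 0 := by
  apply eq_zero_of_pc
  intro n
  cases n with
  | zero =>
    rw [pc_L1t_split]
    simp only [Finset.range_zero, Finset.sum_empty, Finset.sum_const_zero, add_zero]
    rw [pc_Ysol hp, ysol_zero, Nat.cast_zero, E_zero_iter4, D4_eq_zero_of_lowdeg hp]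
  | succ n =>
    rw [pc_L1t_split]
    have hc : ((n+1 : ℕ) : ℚ) ≠ 0 := by
      rw [Nat.cast_ne_zero]; omega
    have hsum : ∀ i ∈ Finset.range 5, ∀ m ∈ Finset.range (n+1),
        coeff (R := ℚ) (n+1-m) (Acoe i) • (E (m : ℚ))^[i] (pc m (Ysol p))
        = coeff (R := ℚ) (n+1-m) (Acoe i) • (E (m : ℚ))^[i] (ysol p m) := by
      intro i _ m _
      rw [pc_Ysol hp]
    rw [pc_Ysol hp (n+1), ysol_succ, E_iter_neg, E4_Einv4 hc,
      Finset.sum_congr rfl fun i hi => Finset.sum_congr rfl fun m hm => hsum i hi m hm]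
    exact neg_add_cancel _

lemma E_map_zero (c : ℚ) : E c 0 = 0 := by simp [E]

lemma E_iter_zero (c : ℚ) (i : ℕ) : (E c)^[i] 0 = 0 := by
  induction i with
  | zero => rfl
  | succ m ih => rw [Function.iterate_succ_apply, E_map_zero, ih]

lemma pc_eq_zero_of_sol {y : Polynomial ℚ⟦X⟧} (hy : L1t y = 0) (h0 : pc 0 y = 0) :
    ∀ n, pc n y = 0 := by
  intro n
  induction n using Nat.strong_induction_on with
  | _ n ih =>
    cases n with
    | zero => exact h0
    | succ n =>
      have h := pc_L1t_split (n+1) y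
      rw [hy, pc_zero] at h
      have hS : ∑ i ∈ Finset.range 5, ∑ m ∈ Finset.range (n+1),
          coeff (R := ℚ) (n+1-m) (Acoe i) • (E (m:ℚ))^[i] (pc m y) = 0 := by
        refine Finset.sum_eq_zero fun i _ => Finset.sum_eq_zero fun m hm => ?_
        rw [ih m (Finset.mem_range.mp hm), E_iter_zero, smul_zero]
      rw [hS, add_zero] at h
      have hc : ((n+1 : ℕ) : ℚ) ≠ 0 := by rw [Nat.cast_ne_zero]; omega
      exact E_iter_injective hc 4 h.symm

lemma lowdeg_of_D4 {q : Polynomial ℚ} (h : Polynomial.derivative^[4] q = 0) : lowdeg q := by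
  intro k hk
  obtain ⟨j, rfl⟩ : ∃ j, k = j + 4 := ⟨k - 4, by omega⟩
  have h2 := congrArg (fun r => Polynomial.coeff r j) h
  simp only [coeff_D4, Polynomial.coeff_zero] at h2
  have hne : ((j+1)*(j+2)*(j+3)*(j+4) : ℚ) ≠ 0 := by positivity
  exact (mul_eq_zero.mp h2).resolve_right hne

lemma lowdeg_of_sol {y : Polynomial ℚ⟦X⟧} (hy : L1t y = 0) : lowdeg (pc 0 y) := by
  have h := pc_L1t_split 0 y
  rw [hy, pc_zero] at h
  simp only [Finset.range_zero, Finset.sum_empty, Finset.sum_const_zero, add_zero] at h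
  rw [Nat.cast_zero, E_zero_iter4] at h
  exact lowdeg_of_D4 h.symm

-- Linearity of L1t
lemma Dt_add (a b : Polynomial ℚ⟦X⟧) : Dt (a + b) = Dt a + Dt b := by
  unfold Dt
  rw [map_add, Polynomial.sum_add_index a b _ (fun i => by rw [Dop_zero, map_zero, zero_mul])
    (fun i x y => by rw [Dop_add, map_add, add_mul])]
  ring

lemma Dt_iter_add (i : ℕ) (a b : Polynomial ℚ⟦X⟧) :
    Dt^[i] (a + b) = Dt^[i] a + Dt^[i] b := by
  induction i generalizing a b with
  | zero => rfl
  | succ m ih => rw [Function.iterate_succ_apply, Function.iterate_succ_apply,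
      Function.iterate_succ_apply, Dt_add, ih]

lemma L1t_add (a b : Polynomial ℚ⟦X⟧) : L1t (a + b) = L1t a + L1t b := by
  unfold L1t
  rw [Dt_iter_add, Dt_iter_add, Dt_iter_add, Dt_add]
  ring

noncomputable def L1tLin : Polynomial ℚ⟦X⟧ →ₗ[ℚ] Polynomial ℚ⟦X⟧ :=
  (AddMonoidHom.mk' L1t L1t_add).toRatLinearMap

lemma L1tLin_apply (y : Polynomial ℚ⟦X⟧) : L1tLin y = L1t y := rfl

noncomputable def pc0Lin : Polynomial ℚ⟦X⟧ →ₗ[ℚ] Polynomial ℚ :=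
  (AddMonoidHom.mk' (pc 0) (pc_add 0)).toRatLinearMap

lemma pc0Lin_apply (y : Polynomial ℚ⟦X⟧) : pc0Lin y = pc 0 y := rfl

/-- The solution set of the Picard-Fuchs equation in `ℚ[[q]][t]` is a `ℚ`-vector
subspace of dimension exactly `4`, reflecting maximal unipotent monodromy at `q = 0`. -/
theorem pfaffian_picardFuchs_solution_space_rank_four :
    ∃ V : Submodule ℚ (Polynomial ℚ⟦X⟧),
      (V : Set (Polynomial ℚ⟦X⟧)) = {y | L1t y = 0} ∧ Module.rank ℚ V = 4 := by

  refine ⟨LinearMap.ker L1tLin, ?_, ?_⟩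
  · ext y
    simp [LinearMap.mem_ker, L1tLin_apply]
  · set V := LinearMap.ker L1tLin with hV
    have hmem : ∀ y : V, pc0Lin (V.subtype y) ∈ Polynomial.degreeLT ℚ 4 := by
      intro y
      rw [Polynomial.mem_degreeLT]
      rw [show ((4:ℕ) : WithBot ℕ) = ((4:ℕ) : WithBot ℕ) from rfl]
      rw [Polynomial.degree_lt_iff_coeff_zero]
      intro m hm
      have hy : L1t (y : Polynomial ℚ⟦X⟧) = 0 := LinearMap.mem_ker.mp y.2
      exact lowdeg_of_sol hy m (by exact_mod_cast hm)
    set Φ : V →ₗ[ℚ] ↥(Polynomial.degreeLT ℚ 4) :=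
      LinearMap.codRestrict (Polynomial.degreeLT ℚ 4) (pc0Lin.comp V.subtype) hmem with hPhi
    have hinj : Function.Injective Φ := by
      refine (LinearMap.ker_eq_bot (M := ↥V) (M₂ := ↥(Polynomial.degreeLT ℚ 4)) (f := Φ)).mp
        (LinearMap.ker_eq_bot'.mpr ?_)
      intro y hy0
      have h0 : pc 0 (y : Polynomial ℚ⟦X⟧) = 0 := by
        have := congrArg (Subtype.val) hy0
        simpa [hPhi, pc0Lin_apply] using this
      have hy : L1t (y : Polynomial ℚ⟦X⟧) = 0 := LinearMap.mem_ker.mp y.2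
      have := eq_zero_of_pc _ (pc_eq_zero_of_sol hy h0)
      exact Subtype.ext this
    have hsurj : Function.Surjective Φ := by
      rintro ⟨q, hq⟩
      have hlow : lowdeg q := by
        intro k hk
        refine (Polynomial.degree_lt_iff_coeff_zero q 4).mp ?_ k (by exact_mod_cast hk)
        exact Polynomial.mem_degreeLT.mp hq
      refine ⟨⟨Ysol q, LinearMap.mem_ker.mpr ?_⟩, ?_⟩
      · rw [L1tLin_apply, L1t_Ysol hlow]
      · apply Subtype.ext
        show pc0Lin (Ysol q) = q
        rw [pc0Lin_apply, pc_Ysol hlow, ysol_zero]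
    have e : V ≃ₗ[ℚ] ↥(Polynomial.degreeLT ℚ 4) := LinearEquiv.ofBijective Φ ⟨hinj, hsurj⟩
    have e2 : V ≃ₗ[ℚ] (Fin 4 → ℚ) := e.trans (Polynomial.degreeLTEquiv ℚ 4)
    have h1 : Module.rank ℚ V = Module.rank ℚ (Fin 4 → ℚ) :=
      @LinearEquiv.rank_eq ℚ (↥V) (Fin 4 → ℚ) _ _ _ _ _ e2
    rw [h1, rank_fin_fun]
    norm_num
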